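/- Let γ ∈ (0,1), let m ≥ 1, let r = ⌈log₂(2m+4)⌉ and s = ⌈√(2/γ)⌉. Let v_1, …, v_m, v_b, v_t, v' ∈ ℝ^d each of Euclidean norm at most 1, and define the polynomial p : ℝ^d → ℝ by p(x) = m + 5/2 − Σ_{i=1}^m (T_s(1 − ⟨v_i, x⟩))^r − (T_s(1 − ⟨x − v_b, v'⟩/2))^r − (T_s(1 − ⟨v_t − x, v'⟩/2))^r, where T_s is the s-th Chebyshev polynomial of the first kind. Then ‖p‖ ≤ (9/2)·(420 r s)^{r s / 2}. -/

import Mathlib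

open Finset RealInnerProductSpace

/-- The coefficient norm `‖p‖ = sqrt (Σ_α c_α²)` of a multivariate polynomial. -/
noncomputable def mvNorm {d : ℕ} (p : MvPolynomial (Fin d) ℝ) : ℝ :=
  Real.sqrt (∑ α ∈ p.support, (MvPolynomial.coeff α p) ^ 2)

/-- The multivariate polynomial `x ↦ ⟨v, x⟩`. -/
noncomputable def innerPoly {d : ℕ} (v : EuclideanSpace ℝ (Fin d)) :
    MvPolynomial (Fin d) ℝ :=
  ∑ i, MvPolynomial.C (v i) * MvPolynomial.X i

namespace SP
open Polynomial

variable {d : ℕ}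

lemma mvNorm_eq_on {p : MvPolynomial (Fin d) ℝ} {S : Finset (Fin d →₀ ℕ)}
    (h : p.support ⊆ S) :
    mvNorm p = Real.sqrt (∑ α ∈ S, (MvPolynomial.coeff α p) ^ 2) := by
  unfold mvNorm
  congr 1
  refine Finset.sum_subset h (fun α _ hα => ?_)
  rw [MvPolynomial.notMem_support_iff.mp hα]
  ring

lemma mvNorm_nonneg (p : MvPolynomial (Fin d) ℝ) : 0 ≤ mvNorm p := Real.sqrt_nonneg _

lemma sqrt_sum_sq_add_le (S : Finset (Fin d →₀ ℕ)) (f g : (Fin d →₀ ℕ) → ℝ) :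
    Real.sqrt (∑ α ∈ S, (f α + g α) ^ 2) ≤
      Real.sqrt (∑ α ∈ S, f α ^ 2) + Real.sqrt (∑ α ∈ S, g α ^ 2) := by
  set A := Real.sqrt (∑ α ∈ S, f α ^ 2) with hA
  set B := Real.sqrt (∑ α ∈ S, g α ^ 2) with hB
  set T := ∑ α ∈ S, (f α + g α) ^ 2 with hT
  have hTnn : 0 ≤ T := Finset.sum_nonneg fun α _ => sq_nonneg _
  have h1 : T ≤ (A + B) * Real.sqrt T := by
    have e : T = (∑ α ∈ S, f α * (f α + g α)) + ∑ α ∈ S, g α * (f α + g α) := by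
      rw [← Finset.sum_add_distrib]
      exact Finset.sum_congr rfl fun α _ => by ring
    have c1 := Real.sum_mul_le_sqrt_mul_sqrt S f (fun α => f α + g α)
    have c2 := Real.sum_mul_le_sqrt_mul_sqrt S g (fun α => f α + g α)
    calc T = (∑ α ∈ S, f α * (f α + g α)) + ∑ α ∈ S, g α * (f α + g α) := e
      _ ≤ A * Real.sqrt T + B * Real.sqrt T := add_le_add c1 c2
      _ = (A + B) * Real.sqrt T := by ring
  rcases eq_or_lt_of_le (Real.sqrt_nonneg T) with h0 | h0
  · rw [← h0]
    positivity
  · have h2 : Real.sqrt T * Real.sqrt T ≤ (A + B) * Real.sqrt T := by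
      rw [Real.mul_self_sqrt hTnn]; exact h1
    exact le_of_mul_le_mul_right h2 h0

lemma mvNorm_add_le (p q : MvPolynomial (Fin d) ℝ) :
    mvNorm (p + q) ≤ mvNorm p + mvNorm q := by
  classical
  set S := p.support ∪ q.support with hS
  have h1 : (p + q).support ⊆ S := MvPolynomial.support_add
  rw [mvNorm_eq_on h1, mvNorm_eq_on (Finset.subset_union_left (s₂ := q.support)),
    mvNorm_eq_on (Finset.subset_union_right (s₁ := p.support))]
  simpa [MvPolynomial.coeff_add] using sqrt_sum_sq_add_le S (fun α => MvPolynomial.coeff α p)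
    (fun α => MvPolynomial.coeff α q)

lemma mvNorm_neg (p : MvPolynomial (Fin d) ℝ) : mvNorm (-p) = mvNorm p := by
  unfold mvNorm
  rw [MvPolynomial.support_neg]
  simp [MvPolynomial.coeff_neg]

lemma mvNorm_sub_le (p q : MvPolynomial (Fin d) ℝ) :
    mvNorm (p - q) ≤ mvNorm p + mvNorm q := by
  rw [sub_eq_add_neg]
  simpa [mvNorm_neg] using mvNorm_add_le p (-q)

lemma mvNorm_C (a : ℝ) : mvNorm (MvPolynomial.C (σ := Fin d) a) = |a| := by
  have hsub : (MvPolynomial.C (σ := Fin d) a).support ⊆ {0} := by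
    rw [MvPolynomial.C_apply]
    rw [MvPolynomial.support_monomial]
    split <;> simp
  rw [mvNorm_eq_on hsub]
  simp [MvPolynomial.coeff_C, Real.sqrt_sq_eq_abs]

lemma mvNorm_smul (a : ℝ) (p : MvPolynomial (Fin d) ℝ) :
    mvNorm (a • p) = |a| * mvNorm p := by
  have h : (a • p).support ⊆ p.support := Finsupp.support_smul
  rw [mvNorm_eq_on h]
  unfold mvNorm
  have hc : ∀ α, MvPolynomial.coeff α (a • p) ^ 2 = a ^ 2 * MvPolynomial.coeff α p ^ 2 := by
    intro α
    rw [MvPolynomial.coeff_smul, smul_eq_mul]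
    ring
  simp_rw [hc]
  rw [← Finset.mul_sum, Real.sqrt_mul (sq_nonneg a), Real.sqrt_sq_eq_abs]

lemma mvNorm_sum_le {ι : Type*} (t : Finset ι) (f : ι → MvPolynomial (Fin d) ℝ) :
    mvNorm (∑ i ∈ t, f i) ≤ ∑ i ∈ t, mvNorm (f i) := by
  classical
  induction t using Finset.induction with
  | empty => simp [mvNorm, MvPolynomial.support_zero]
  | insert _ _ h ih =>
    rw [Finset.sum_insert h, Finset.sum_insert h]
    exact le_trans (mvNorm_add_le _ _) (by linarith)


lemma innerPoly_pow_expand (v : EuclideanSpace ℝ (Fin d)) (j : ℕ) :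
    (innerPoly v) ^ j = ∑ k ∈ piAntidiag (univ : Finset (Fin d)) j,
      MvPolynomial.monomial (Finsupp.equivFunOnFinite.symm k)
        ((Nat.multinomial univ k : ℝ) * ∏ i, v i ^ k i) := by
  rw [innerPoly, Finset.sum_pow_eq_sum_piAntidiag]
  refine Finset.sum_congr rfl fun k _ => ?_
  rw [MvPolynomial.monomial_eq]
  have h1 : ∏ i, (MvPolynomial.C (v i) * MvPolynomial.X i (R := ℝ)) ^ k i
      = MvPolynomial.C (∏ i, v i ^ k i) * ∏ i, MvPolynomial.X i (R := ℝ) ^ k i := by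
    rw [map_prod]
    rw [← Finset.prod_mul_distrib]
    refine Finset.prod_congr rfl fun i _ => ?_
    rw [mul_pow, map_pow]
  have h2 : (Finsupp.equivFunOnFinite.symm k).prod (fun n e => MvPolynomial.X n (R := ℝ) ^ e)
      = ∏ i, MvPolynomial.X i (R := ℝ) ^ k i := by
    rw [Finsupp.prod_fintype]
    · rfl
    · intro i; exact pow_zero _
  rw [h1, h2, map_mul, ← MvPolynomial.C_eq_coe_nat]
  ring

lemma norm_sq_eq_sum (v : EuclideanSpace ℝ (Fin d)) : ‖v‖ ^ 2 = ∑ i, v i ^ 2 := by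
  rw [EuclideanSpace.norm_eq, Real.sq_sqrt (Finset.sum_nonneg fun i _ => sq_nonneg _)]
  exact Finset.sum_congr rfl fun i _ => by rw [Real.norm_eq_abs, sq_abs]

lemma mvNorm_innerPoly_pow {v : EuclideanSpace ℝ (Fin d)} (hv : ‖v‖ ≤ 1) (j : ℕ) :
    mvNorm ((innerPoly v) ^ j) ≤ Real.sqrt (Nat.factorial j) := by
  classical
  set Φ : (Fin d → ℕ) → (Fin d →₀ ℕ) := fun k => Finsupp.equivFunOnFinite.symm k with hΦ
  have hΦinj : Function.Injective Φ := Finsupp.equivFunOnFinite.symm.injective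
  set c : (Fin d → ℕ) → ℝ := fun k => (Nat.multinomial univ k : ℝ) * ∏ i, v i ^ k i with hc
  have hexp := innerPoly_pow_expand v j
  -- support
  have hsupp : ((innerPoly v) ^ j).support ⊆ (piAntidiag (univ : Finset (Fin d)) j).image Φ := by
    rw [hexp]
    refine le_trans MvPolynomial.support_sum ?_
    intro α hα
    rw [Finset.mem_biUnion] at hα
    obtain ⟨k, hk, hαk⟩ := hα
    have := MvPolynomial.support_monomial_subset hαk
    rw [Finset.mem_singleton] at this
    exact Finset.mem_image.mpr ⟨k, hk, this.symm⟩
  -- coefficient values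
  have hcoeff : ∀ k ∈ piAntidiag (univ : Finset (Fin d)) j,
      MvPolynomial.coeff (Φ k) ((innerPoly v) ^ j) = c k := by
    intro k hk
    rw [hexp, MvPolynomial.coeff_sum]
    rw [Finset.sum_eq_single k]
    · rw [MvPolynomial.coeff_monomial, if_pos rfl]
    · intro b hb hbk
      rw [MvPolynomial.coeff_monomial, if_neg (fun h => hbk (hΦinj h))]
    · intro h; exact absurd hk h
  rw [mvNorm_eq_on hsupp]
  rw [Finset.sum_image (fun a _ b _ h => hΦinj h)]
  have hstep : ∑ k ∈ piAntidiag (univ : Finset (Fin d)) j,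
      MvPolynomial.coeff (Φ k) ((innerPoly v) ^ j) ^ 2
      ≤ (Nat.factorial j : ℝ) * ∑ k ∈ piAntidiag (univ : Finset (Fin d)) j,
          (Nat.multinomial univ k : ℝ) * ∏ i, (v i ^ 2) ^ k i := by
    rw [Finset.mul_sum]
    refine Finset.sum_le_sum fun k hk => ?_
    rw [hcoeff k hk]
    have hmle : (Nat.multinomial univ k : ℝ) ≤ (Nat.factorial j : ℝ) := by
      have hdvd : Nat.multinomial univ k ∣ Nat.factorial j := by
        have := Nat.multinomial_spec univ k
        rw [(Finset.mem_piAntidiag.mp hk).1] at this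
        exact ⟨_, by rw [mul_comm] at this; exact this.symm⟩
      exact_mod_cast Nat.le_of_dvd (Nat.factorial_pos j) hdvd
    have hprod : ∏ i, (v i ^ 2) ^ k i = (∏ i, v i ^ k i) ^ 2 := by
      rw [← Finset.prod_pow]
      exact Finset.prod_congr rfl fun i _ => by ring
    rw [hc]
    simp only
    rw [mul_pow, hprod, ← mul_assoc]
    have h0 : (0 : ℝ) ≤ (∏ i, v i ^ k i) ^ 2 := sq_nonneg _
    have hm0 : (0 : ℝ) ≤ (Nat.multinomial univ k : ℝ) := Nat.cast_nonneg _
    calc (Nat.multinomial univ k : ℝ) ^ 2 * (∏ i, v i ^ k i) ^ 2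
        = (Nat.multinomial univ k : ℝ) * ((Nat.multinomial univ k : ℝ) * (∏ i, v i ^ k i) ^ 2) := by
          ring
      _ ≤ (Nat.factorial j : ℝ) * ((Nat.multinomial univ k : ℝ) * (∏ i, v i ^ k i) ^ 2) :=
          mul_le_mul_of_nonneg_right hmle (mul_nonneg hm0 h0)
      _ = (Nat.factorial j : ℝ) * (Nat.multinomial univ k : ℝ) * (∏ i, v i ^ k i) ^ 2 := by ring
  have hsum2 : ∑ k ∈ piAntidiag (univ : Finset (Fin d)) j,
      (Nat.multinomial univ k : ℝ) * ∏ i, (v i ^ 2) ^ k i = (∑ i, v i ^ 2) ^ j :=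
    (Finset.sum_pow_eq_sum_piAntidiag univ (fun i => v i ^ 2) j).symm
  have hnorm1 : (∑ i, v i ^ 2) ≤ 1 := by
    rw [← norm_sq_eq_sum]
    nlinarith [norm_nonneg v]
  have hpow1 : (∑ i, v i ^ 2) ^ j ≤ 1 :=
    pow_le_one₀ (Finset.sum_nonneg fun i _ => sq_nonneg _) hnorm1
  refine Real.sqrt_le_sqrt (hstep.trans ?_)
  rw [hsum2]
  have hnn : (0:ℝ) ≤ (∑ i, v i ^ 2) ^ j :=
    pow_nonneg (Finset.sum_nonneg fun (i : Fin d) _ => sq_nonneg (v i)) j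
  nlinarith [Nat.cast_nonneg (α := ℝ) (Nat.factorial j), hpow1, hnn]


/-- `Maj F P`: `P` coefficientwise dominates the absolute values of coefficients of `F`. -/
def Maj (F P : ℝ[X]) : Prop := ∀ j, |F.coeff j| ≤ P.coeff j

lemma Maj.coeff_nonneg {F P : ℝ[X]} (h : Maj F P) (j : ℕ) : 0 ≤ P.coeff j :=
  le_trans (abs_nonneg _) (h j)

lemma maj_C {a b : ℝ} (h : |a| ≤ b) : Maj (C a) (C b) := by
  intro j
  rcases eq_or_ne j 0 with rfl | hj
  · simpa using h
  · simp [coeff_C, hj, abs_nonneg]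

lemma maj_one : Maj 1 1 := by
  simpa using maj_C (a := 1) (b := 1) (by norm_num)

lemma maj_X : Maj (X : ℝ[X]) X := by
  intro j
  rcases eq_or_ne j 1 with rfl | hj
  · simp
  · simp [coeff_X, hj, Ne.symm hj]

lemma maj_add {F P G Q : ℝ[X]} (hF : Maj F P) (hG : Maj G Q) : Maj (F + G) (P + Q) := by
  intro j
  rw [coeff_add, coeff_add]
  exact le_trans (abs_add_le _ _) (add_le_add (hF j) (hG j))

lemma maj_sub {F P G Q : ℝ[X]} (hF : Maj F P) (hG : Maj G Q) : Maj (F - G) (P + Q) := by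
  intro j
  rw [coeff_sub, coeff_add]
  exact le_trans (abs_sub _ _) (add_le_add (hF j) (hG j))

lemma maj_mul {F P G Q : ℝ[X]} (hF : Maj F P) (hG : Maj G Q) : Maj (F * G) (P * Q) := by
  intro n
  rw [coeff_mul, coeff_mul]
  refine le_trans (Finset.abs_sum_le_sum_abs _ _) (Finset.sum_le_sum fun x _ => ?_)
  rw [abs_mul]
  exact mul_le_mul (hF x.1) (hG x.2) (abs_nonneg _) (hF.coeff_nonneg x.1)

lemma maj_pow {F P : ℝ[X]} (hF : Maj F P) (n : ℕ) : Maj (F ^ n) (P ^ n) := by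
  induction n with
  | zero => simpa using maj_one
  | succ n ih => rw [pow_succ, pow_succ]; exact maj_mul ih hF

lemma maj_sum {ι : Type*} {t : Finset ι} {f g : ι → ℝ[X]}
    (h : ∀ i ∈ t, Maj (f i) (g i)) : Maj (∑ i ∈ t, f i) (∑ i ∈ t, g i) := by
  classical
  induction t using Finset.induction with
  | empty => intro j; simp
  | insert _ _ hnot ih =>
    rw [Finset.sum_insert hnot, Finset.sum_insert hnot]
    exact maj_add (h _ (Finset.mem_insert_self _ _))
      (ih fun i hi => h i (Finset.mem_insert_of_mem hi))

lemma maj_comp {F P G Q : ℝ[X]} (hF : Maj F P) (hG : Maj G Q) :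
    Maj (F.comp G) (P.comp Q) := by
  classical
  rw [comp_eq_sum_left, comp_eq_sum_left, sum_def, sum_def]
  have hFP : F.support ⊆ F.support ∪ P.support := Finset.subset_union_left
  have hPP : P.support ⊆ F.support ∪ P.support := Finset.subset_union_right
  rw [Finset.sum_subset hFP (fun j _ hj => by
    rw [notMem_support_iff.mp hj, map_zero, zero_mul]),
    Finset.sum_subset hPP (fun j _ hj => by
    rw [notMem_support_iff.mp hj, map_zero, zero_mul])]
  exact maj_sum fun j _ => maj_mul (maj_C (hF j)) (maj_pow hG j)

lemma maj_natDegree_le {F P : ℝ[X]} (h : Maj F P) : F.natDegree ≤ P.natDegree := by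
  rw [natDegree_le_iff_coeff_eq_zero]
  intro N hN
  have hP : P.coeff N = 0 := coeff_eq_zero_of_natDegree_lt hN
  have := h N
  rw [hP] at this
  exact abs_eq_zero.mp (le_antisymm this (abs_nonneg _))

lemma eval_one_nonneg {P : ℝ[X]} (h : ∀ j, 0 ≤ P.coeff j) : 0 ≤ P.eval 1 := by
  rw [eval_eq_sum_range]
  exact Finset.sum_nonneg fun j _ => by simpa using h j

lemma eval_mono_arg {P : ℝ[X]} (h : ∀ j, 0 ≤ P.coeff j) {x y : ℝ} (hx : 0 ≤ x) (hxy : x ≤ y) :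
    P.eval x ≤ P.eval y := by
  rw [eval_eq_sum_range, eval_eq_sum_range]
  exact Finset.sum_le_sum fun j _ =>
    mul_le_mul_of_nonneg_left (pow_le_pow_left₀ hx hxy j) (h j)

lemma eval_nonneg_arg {P : ℝ[X]} (h : ∀ j, 0 ≤ P.coeff j) {x : ℝ} (hx : 0 ≤ x) :
    0 ≤ P.eval x := by
  rw [eval_eq_sum_range]
  exact Finset.sum_nonneg fun j _ => mul_nonneg (h j) (pow_nonneg hx j)

/-- Sum of coefficients over any range extending past natDegree equals eval at 1. -/
lemma sum_coeff_le_eval_one {F P : ℝ[X]} (h : Maj F P) {N : ℕ} (hN : P.natDegree < N) :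
    ∑ j ∈ Finset.range N, |F.coeff j| ≤ P.eval 1 := by
  rw [eval_eq_sum_range' hN]
  refine Finset.sum_le_sum fun j _ => ?_
  simpa using h j


noncomputable def chebMaj : ℕ → ℝ[X]
  | 0 => 1
  | 1 => X
  | (n + 2) => 2 * X * chebMaj (n + 1) + chebMaj n

lemma maj_two : Maj (2 : ℝ[X]) 2 := by
  have h := maj_C (a := (2:ℝ)) (b := 2) (by norm_num)
  rw [show (2 : ℝ[X]) = C 2 from (map_ofNat C 2).symm]; exact h

lemma maj_T : ∀ n : ℕ, Maj (Chebyshev.T ℝ (n : ℤ)) (chebMaj n) := by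
  intro n
  induction n using Nat.strong_induction_on with
  | _ n ih =>
    match n with
    | 0 => simpa [chebMaj] using (by simpa using maj_C (a := (1:ℝ)) (b := 1) (by norm_num))
    | 1 => simpa [chebMaj, Chebyshev.T_one] using maj_X
    | (n + 2) =>
      have hcast : ((n + 2 : ℕ) : ℤ) = (n : ℤ) + 2 := by push_cast; ring
      rw [hcast, Chebyshev.T_add_two]
      show Maj _ (chebMaj (n + 2))
      rw [chebMaj]
      have h1 := ih (n + 1) (by omega)
      have h0 := ih n (by omega)
      have hc1 : ((n : ℤ) + 1) = ((n + 1 : ℕ) : ℤ) := by push_cast; ring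
      rw [hc1]
      exact maj_sub (maj_mul (maj_mul maj_two maj_X) h1) h0

lemma chebMaj_natDegree : ∀ n : ℕ, (chebMaj n).natDegree ≤ n := by
  intro n
  induction n using Nat.strong_induction_on with
  | _ n ih =>
    match n with
    | 0 => simp [chebMaj]
    | 1 => simp [chebMaj]
    | (n + 2) =>
      rw [chebMaj]
      refine le_trans (natDegree_add_le _ _) ?_
      have h1 : (2 * X * chebMaj (n + 1)).natDegree ≤ n + 2 := by
        refine le_trans (natDegree_mul_le) ?_
        have : (2 * X : ℝ[X]).natDegree ≤ 1 := le_trans natDegree_mul_le (by simp)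
        have := ih (n + 1) (by omega)
        omega
      have h0 := ih n (by omega)
      omega

lemma chebMaj_eval_two : ∀ n : ℕ, 0 ≤ (chebMaj n).eval 2 ∧ (chebMaj n).eval 2 ≤ 5 ^ n := by
  intro n
  induction n using Nat.strong_induction_on with
  | _ n ih =>
    match n with
    | 0 => simp [chebMaj]
    | 1 => norm_num [chebMaj]
    | (n + 2) =>
      obtain ⟨ha1, hb1⟩ := ih (n + 1) (by omega)
      obtain ⟨ha0, hb0⟩ := ih n (by omega)
      rw [chebMaj]
      simp only [eval_add, eval_mul, eval_ofNat, eval_X]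
      constructor
      · positivity
      · have : (5:ℝ) ^ (n + 2) = 25 * 5 ^ n := by ring
        have h5 : (5:ℝ) ^ (n+1) = 5 * 5 ^ n := by ring
        nlinarith


lemma term_bound {w : EuclideanSpace ℝ (Fin d)} (hw : ‖w‖ ≤ 1)
    {G Q : ℝ[X]} (hGQ : Maj G Q) (hQdeg : Q.natDegree ≤ 1) (hQ1 : Q.eval 1 ≤ 2)
    (s r : ℕ) :
    mvNorm (Polynomial.aeval (innerPoly w) (((Chebyshev.T ℝ (s : ℤ)).comp G) ^ r))
      ≤ 5 ^ (r * s) * Real.sqrt (Nat.factorial (r * s)) := by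
  set F := ((Chebyshev.T ℝ (s : ℤ)).comp G) ^ r with hF
  set P := ((chebMaj s).comp Q) ^ r with hP
  have hmaj : Maj F P := maj_pow (maj_comp (maj_T s) hGQ) r
  have hPdeg : P.natDegree ≤ r * s := by
    refine natDegree_pow_le.trans ?_
    have h1 : ((chebMaj s).comp Q).natDegree ≤ s :=
      natDegree_comp_le.trans (by
        have := chebMaj_natDegree s
        calc (chebMaj s).natDegree * Q.natDegree ≤ s * 1 := Nat.mul_le_mul this hQdeg
          _ = s := by omega)
    exact Nat.mul_le_mul_left r h1
  have hFdeg : F.natDegree ≤ r * s := (maj_natDegree_le hmaj).trans hPdeg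
  have hQnn := hGQ.coeff_nonneg
  have hQ1nn : 0 ≤ Q.eval 1 := eval_one_nonneg hQnn
  have hchebnn := (maj_T s).coeff_nonneg
  have hPev : P.eval 1 ≤ 5 ^ (r * s) := by
    rw [hP, eval_pow, eval_comp]
    have h1 : (chebMaj s).eval (Q.eval 1) ≤ (chebMaj s).eval 2 :=
      eval_mono_arg hchebnn hQ1nn hQ1
    have h2 := (chebMaj_eval_two s).2
    have h0 : 0 ≤ (chebMaj s).eval (Q.eval 1) := eval_nonneg_arg hchebnn hQ1nn
    calc (chebMaj s).eval (Q.eval 1) ^ r ≤ ((5:ℝ) ^ s) ^ r :=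
          pow_le_pow_left₀ h0 (h1.trans h2) r
      _ = 5 ^ (r * s) := by rw [← pow_mul, Nat.mul_comm]
  have hN : F.natDegree < r * s + 1 := by omega
  rw [Polynomial.aeval_eq_sum_range' hN]
  refine le_trans (mvNorm_sum_le _ _) ?_
  have step : ∀ j ∈ Finset.range (r * s + 1),
      mvNorm (F.coeff j • (innerPoly w) ^ j)
        ≤ |F.coeff j| * Real.sqrt (Nat.factorial (r * s)) := by
    intro j hj
    rw [mvNorm_smul]
    have h1 := mvNorm_innerPoly_pow hw j
    have h2 : Real.sqrt (Nat.factorial j) ≤ Real.sqrt (Nat.factorial (r * s)) := by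
      refine Real.sqrt_le_sqrt ?_
      exact_mod_cast Nat.factorial_le (by
        have := Finset.mem_range.mp hj; omega)
    exact mul_le_mul_of_nonneg_left (h1.trans h2) (abs_nonneg _)
  refine le_trans (Finset.sum_le_sum step) ?_
  rw [← Finset.sum_mul]
  have hsumF : ∑ j ∈ Finset.range (r * s + 1), |F.coeff j| ≤ P.eval 1 :=
    sum_coeff_le_eval_one hmaj (by omega)
  have := Real.sqrt_nonneg ((Nat.factorial (r * s) : ℝ))
  calc (∑ j ∈ Finset.range (r * s + 1), |F.coeff j|) * Real.sqrt (Nat.factorial (r * s))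
      ≤ P.eval 1 * Real.sqrt (Nat.factorial (r * s)) := by
        exact mul_le_mul_of_nonneg_right hsumF this
    _ ≤ 5 ^ (r * s) * Real.sqrt (Nat.factorial (r * s)) :=
        mul_le_mul_of_nonneg_right hPev this


lemma rpow_helper (n : ℕ) (a : ℝ) (ha : 0 ≤ a) :
    (a ^ 2) ^ ((n : ℝ) / 2) = a ^ n := by
  rw [← Real.rpow_natCast a 2, ← Real.rpow_mul ha, ← Real.rpow_natCast a n]
  congr 1
  push_cast
  ring

end SP

open SP Polynomial

theorem sep_poly_mvNorm_le {d m : ℕ} (hm : 1 ≤ m) (γ : ℝ)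
    (hγ : γ ∈ Set.Ioo (0 : ℝ) 1)
    (r s : ℕ) (hr : r = ⌈Real.logb 2 (2 * m + 4)⌉₊) (hs : s = ⌈Real.sqrt (2 / γ)⌉₊)
    (v : Fin m → EuclideanSpace ℝ (Fin d)) (vb vt v' : EuclideanSpace ℝ (Fin d))
    (hv : ∀ i, ‖v i‖ ≤ 1) (hvb : ‖vb‖ ≤ 1) (hvt : ‖vt‖ ≤ 1) (hv' : ‖v'‖ ≤ 1) :
    mvNorm (MvPolynomial.C ((m : ℝ) + 5 / 2)
        - ∑ i, (Polynomial.aeval (1 - innerPoly (v i))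
            (Polynomial.Chebyshev.T ℝ (s : ℤ))) ^ r
        - (Polynomial.aeval
            (1 - MvPolynomial.C (2 : ℝ)⁻¹ * (innerPoly v' - MvPolynomial.C ⟪vb, v'⟫))
            (Polynomial.Chebyshev.T ℝ (s : ℤ))) ^ r
        - (Polynomial.aeval
            (1 - MvPolynomial.C (2 : ℝ)⁻¹ * (MvPolynomial.C ⟪vt, v'⟫ - innerPoly v'))
            (Polynomial.Chebyshev.T ℝ (s : ℤ))) ^ r)
      ≤ 9 / 2 * (420 * (r : ℝ) * (s : ℝ)) ^ (((r : ℝ) * (s : ℝ)) / 2) := by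
  classical
  obtain ⟨hγ0, hγ1⟩ := hγ
  set cb : ℝ := ⟪vb, v'⟫ with hcbdef
  set cd : ℝ := ⟪vt, v'⟫ with hcddef
  have hcb : |cb| ≤ 1 := by
    refine (abs_real_inner_le_norm vb v').trans ?_
    nlinarith [norm_nonneg vb, norm_nonneg v']
  have hcd : |cd| ≤ 1 := by
    refine (abs_real_inner_le_norm vt v').trans ?_
    nlinarith [norm_nonneg vt, norm_nonneg v']
  set n := r * s with hn
  have hr1 : 1 ≤ r := by
    rw [hr, Nat.one_le_ceil_iff]
    refine Real.logb_pos (by norm_num) ?_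
    have : (1 : ℝ) ≤ m := by exact_mod_cast hm
    linarith
  have hs1 : 1 ≤ s := by
    rw [hs, Nat.one_le_ceil_iff]
    exact Real.sqrt_pos.mpr (by positivity)
  have hn1 : 1 ≤ n := by
    calc 1 = 1 * 1 := rfl
      _ ≤ r * s := Nat.mul_le_mul hr1 hs1
  have h2r : (2 * m + 4 : ℝ) ≤ 2 ^ r := by
    have hle : Real.logb 2 (2 * m + 4) ≤ r := by
      rw [hr]; exact Nat.le_ceil _
    have hpos : (0 : ℝ) < 2 * m + 4 := by positivity
    have h2 : (2:ℝ) ^ (Real.logb 2 (2 * m + 4)) ≤ (2:ℝ) ^ (r : ℝ) :=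
      (Real.rpow_le_rpow_left_iff (by norm_num : (1:ℝ) < 2)).mpr hle
    rw [Real.rpow_logb (by norm_num) (by norm_num) hpos, Real.rpow_natCast] at h2
    exact h2
  set K := (5 : ℝ) ^ n * Real.sqrt (Nat.factorial n) with hK
  have hKnn : 0 ≤ K := by positivity
  -- majorant data for G₁ = 1 - X
  have hQ1maj : Maj (1 - Polynomial.X : ℝ[X]) (1 + Polynomial.X) := maj_sub maj_one maj_X
  have hQ1deg : (1 + Polynomial.X : ℝ[X]).natDegree ≤ 1 :=
    (natDegree_add_le _ _).trans (by simp)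
  have hQ1ev : (1 + Polynomial.X : ℝ[X]).eval 1 ≤ 2 := by norm_num
  -- majorant data for G_B = 1 - C 2⁻¹ * (X - C cb)
  have hQBmaj : Maj (1 - Polynomial.C (2:ℝ)⁻¹ * (Polynomial.X - Polynomial.C cb))
      (1 + Polynomial.C (2:ℝ)⁻¹ * (Polynomial.X + Polynomial.C |cb|)) :=
    maj_sub maj_one (maj_mul (maj_C (le_of_eq (abs_of_nonneg (by norm_num)))) (maj_sub maj_X (maj_C le_rfl)))
  have hQBdeg : (1 + Polynomial.C (2:ℝ)⁻¹ * (Polynomial.X + Polynomial.C |cb|)).natDegree ≤ 1 := by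
    have hx : (Polynomial.X + Polynomial.C |cb| : ℝ[X]).natDegree ≤ 1 := by
      refine (natDegree_add_le _ _).trans ?_
      simp
    have h2 : (Polynomial.C (2:ℝ)⁻¹ * (Polynomial.X + Polynomial.C |cb|)).natDegree ≤ 1 := by
      refine natDegree_mul_le.trans ?_
      simpa using hx
    refine (natDegree_add_le _ _).trans ?_
    simpa using h2
  have hQBev : (1 + Polynomial.C (2:ℝ)⁻¹ * (Polynomial.X + Polynomial.C |cb|)).eval 1 ≤ 2 := by
    simp only [eval_add, eval_one, eval_mul, eval_C, eval_X]
    linarith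
  -- majorant data for G_D = 1 - C 2⁻¹ * (C cd - X)
  have hQDmaj : Maj (1 - Polynomial.C (2:ℝ)⁻¹ * (Polynomial.C cd - Polynomial.X))
      (1 + Polynomial.C (2:ℝ)⁻¹ * (Polynomial.C |cd| + Polynomial.X)) :=
    maj_sub maj_one (maj_mul (maj_C (le_of_eq (abs_of_nonneg (by norm_num)))) (maj_sub (maj_C le_rfl) maj_X))
  have hQDdeg : (1 + Polynomial.C (2:ℝ)⁻¹ * (Polynomial.C |cd| + Polynomial.X)).natDegree ≤ 1 := by
    have hx : (Polynomial.C |cd| + Polynomial.X : ℝ[X]).natDegree ≤ 1 := by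
      refine (natDegree_add_le _ _).trans ?_
      simp
    have h2 : (Polynomial.C (2:ℝ)⁻¹ * (Polynomial.C |cd| + Polynomial.X)).natDegree ≤ 1 := by
      refine natDegree_mul_le.trans ?_
      simpa using hx
    refine (natDegree_add_le _ _).trans ?_
    simpa using h2
  have hQDev : (1 + Polynomial.C (2:ℝ)⁻¹ * (Polynomial.C |cd| + Polynomial.X)).eval 1 ≤ 2 := by
    simp only [eval_add, eval_one, eval_mul, eval_C, eval_X]
    linarith
  -- rewriting the three kinds of terms
  have e1 : ∀ i, (Polynomial.aeval (1 - innerPoly (v i)) (Polynomial.Chebyshev.T ℝ (s : ℤ))) ^ r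
      = Polynomial.aeval (innerPoly (v i))
          (((Polynomial.Chebyshev.T ℝ (s : ℤ)).comp (1 - Polynomial.X)) ^ r) := by
    intro i
    have harg : Polynomial.aeval (innerPoly (v i)) (1 - Polynomial.X : ℝ[X])
        = 1 - innerPoly (v i) := by
      simp
    rw [map_pow, Polynomial.aeval_comp, harg]
  have e2 : (Polynomial.aeval
        (1 - MvPolynomial.C (2 : ℝ)⁻¹ * (innerPoly v' - MvPolynomial.C cb))
        (Polynomial.Chebyshev.T ℝ (s : ℤ))) ^ r
      = Polynomial.aeval (innerPoly v')
          (((Polynomial.Chebyshev.T ℝ (s : ℤ)).comp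
            (1 - Polynomial.C (2:ℝ)⁻¹ * (Polynomial.X - Polynomial.C cb))) ^ r) := by
    have harg : Polynomial.aeval (innerPoly v')
        (1 - Polynomial.C (2:ℝ)⁻¹ * (Polynomial.X - Polynomial.C cb))
        = 1 - MvPolynomial.C (2:ℝ)⁻¹ * (innerPoly v' - MvPolynomial.C cb) := by
      simp [MvPolynomial.algebraMap_eq]
    rw [map_pow, Polynomial.aeval_comp, harg]
  have e3 : (Polynomial.aeval
        (1 - MvPolynomial.C (2 : ℝ)⁻¹ * (MvPolynomial.C cd - innerPoly v'))
        (Polynomial.Chebyshev.T ℝ (s : ℤ))) ^ r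
      = Polynomial.aeval (innerPoly v')
          (((Polynomial.Chebyshev.T ℝ (s : ℤ)).comp
            (1 - Polynomial.C (2:ℝ)⁻¹ * (Polynomial.C cd - Polynomial.X))) ^ r) := by
    have harg : Polynomial.aeval (innerPoly v')
        (1 - Polynomial.C (2:ℝ)⁻¹ * (Polynomial.C cd - Polynomial.X))
        = 1 - MvPolynomial.C (2:ℝ)⁻¹ * (MvPolynomial.C cd - innerPoly v') := by
      simp [MvPolynomial.algebraMap_eq]
    rw [map_pow, Polynomial.aeval_comp, harg]
  -- bounds on each term
  have hA : ∀ i, mvNorm ((Polynomial.aeval (1 - innerPoly (v i))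
      (Polynomial.Chebyshev.T ℝ (s : ℤ))) ^ r) ≤ K := by
    intro i
    rw [e1 i]
    exact term_bound (hv i) hQ1maj hQ1deg hQ1ev s r
  have hB : mvNorm ((Polynomial.aeval
      (1 - MvPolynomial.C (2 : ℝ)⁻¹ * (innerPoly v' - MvPolynomial.C cb))
      (Polynomial.Chebyshev.T ℝ (s : ℤ))) ^ r) ≤ K := by
    rw [e2]
    exact term_bound hv' hQBmaj hQBdeg hQBev s r
  have hD : mvNorm ((Polynomial.aeval
      (1 - MvPolynomial.C (2 : ℝ)⁻¹ * (MvPolynomial.C cd - innerPoly v'))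
      (Polynomial.Chebyshev.T ℝ (s : ℤ))) ^ r) ≤ K := by
    rw [e3]
    exact term_bound hv' hQDmaj hQDdeg hQDev s r
  -- triangle inequality
  have hC : mvNorm (MvPolynomial.C (σ := Fin d) ((m : ℝ) + 5 / 2)) = (m : ℝ) + 5 / 2 := by
    rw [mvNorm_C, abs_of_nonneg (by positivity)]
  have hSum : mvNorm (∑ i, (Polynomial.aeval (1 - innerPoly (v i))
      (Polynomial.Chebyshev.T ℝ (s : ℤ))) ^ r) ≤ (m : ℝ) * K := by
    refine (mvNorm_sum_le _ _).trans ?_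
    refine le_trans (Finset.sum_le_sum fun i _ => hA i) ?_
    rw [Finset.sum_const, Finset.card_univ, Fintype.card_fin, nsmul_eq_mul]
  have htotal : mvNorm (MvPolynomial.C ((m : ℝ) + 5 / 2)
        - ∑ i, (Polynomial.aeval (1 - innerPoly (v i))
            (Polynomial.Chebyshev.T ℝ (s : ℤ))) ^ r
        - (Polynomial.aeval
            (1 - MvPolynomial.C (2 : ℝ)⁻¹ * (innerPoly v' - MvPolynomial.C cb))
            (Polynomial.Chebyshev.T ℝ (s : ℤ))) ^ r
        - (Polynomial.aeval
            (1 - MvPolynomial.C (2 : ℝ)⁻¹ * (MvPolynomial.C cd - innerPoly v'))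
            (Polynomial.Chebyshev.T ℝ (s : ℤ))) ^ r)
      ≤ ((m : ℝ) + 5 / 2) + ((m : ℝ) * K + K + K) := by
    refine le_trans (mvNorm_sub_le _ _) ?_
    refine le_trans (add_le_add (mvNorm_sub_le _ _) le_rfl) ?_
    refine le_trans (add_le_add (add_le_add (mvNorm_sub_le _ _) le_rfl) le_rfl) ?_
    rw [hC]
    linarith [hSum, hB, hD]
  refine htotal.trans ?_
  -- final arithmetic
  have hfact : Real.sqrt (Nat.factorial n) ≤ (n : ℝ) ^ ((n : ℝ) / 2) := by
    have h1 : ((Nat.factorial n : ℝ)) ≤ ((n : ℝ)) ^ (n : ℕ) := by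
      exact_mod_cast Nat.factorial_le_pow n
    refine (Real.sqrt_le_sqrt h1).trans ?_
    rw [Real.sqrt_eq_rpow, ← Real.rpow_natCast ((n : ℝ)) n, ← Real.rpow_mul (Nat.cast_nonneg n)]
    rw [show (n : ℝ) * (1 / 2) = (n : ℝ) / 2 by ring]
  set E := (420 * (n : ℝ)) ^ ((n : ℝ) / 2) with hE
  have hEnn : 0 ≤ E := Real.rpow_nonneg (by positivity) _
  have hnhalf : 0 ≤ (n : ℝ) / 2 := by positivity
  have hE1 : (2 : ℝ) ^ n ≤ E := by
    have h4 : ((2:ℝ) ^ 2) ^ ((n : ℝ) / 2) = 2 ^ n := rpow_helper n 2 (by norm_num)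
    rw [hE, ← h4]
    refine Real.rpow_le_rpow (by norm_num) ?_ hnhalf
    have h1n : (1 : ℝ) ≤ (n : ℝ) := by exact_mod_cast hn1
    norm_num
    linarith
  have hE2 : (10 : ℝ) ^ n * (n : ℝ) ^ ((n : ℝ) / 2) ≤ E := by
    have h100 : ((10:ℝ) ^ 2) ^ ((n : ℝ) / 2) = 10 ^ n := rpow_helper n 10 (by norm_num)
    have hmulr : ((10:ℝ) ^ 2 * (n : ℝ)) ^ ((n : ℝ) / 2)
        = ((10:ℝ) ^ 2) ^ ((n : ℝ) / 2) * (n : ℝ) ^ ((n : ℝ) / 2) :=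
      Real.mul_rpow (by norm_num) (Nat.cast_nonneg n)
    rw [← h100, ← hmulr, hE]
    refine Real.rpow_le_rpow (by positivity) ?_ hnhalf
    have h0n : (0 : ℝ) ≤ (n : ℝ) := Nat.cast_nonneg n
    norm_num
    linarith
  have hKle : K ≤ 5 ^ n * (n : ℝ) ^ ((n : ℝ) / 2) := by
    rw [hK]
    exact mul_le_mul_of_nonneg_left hfact (by positivity)
  have hm2 : (m : ℝ) + 2 ≤ 2 ^ n / 2 := by
    have h2rn : (2 : ℝ) ^ r ≤ 2 ^ n := by
      refine pow_le_pow_right₀ (by norm_num) ?_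
      calc r = r * 1 := (mul_one r).symm
        _ ≤ r * s := Nat.mul_le_mul_left r hs1
    linarith
  have hterm2 : (m : ℝ) * K + K + K ≤ E / 2 := by
    have h1 : (m : ℝ) * K + K + K = ((m : ℝ) + 2) * K := by ring
    rw [h1]
    have h2 : ((m : ℝ) + 2) * K ≤ (2 ^ n / 2) * (5 ^ n * (n : ℝ) ^ ((n : ℝ) / 2)) := by
      refine mul_le_mul hm2 hKle hKnn (by positivity)
    refine h2.trans ?_
    have h3 : (2:ℝ) ^ n * 5 ^ n = 10 ^ n := by
      rw [← mul_pow]; norm_num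
    calc (2 ^ n / 2) * (5 ^ n * (n : ℝ) ^ ((n : ℝ) / 2))
        = (10 ^ n * (n : ℝ) ^ ((n : ℝ) / 2)) / 2 := by rw [← h3]; ring
      _ ≤ E / 2 := by linarith [hE2]
  have hterm1 : (m : ℝ) + 5 / 2 ≤ E := by
    have : (m : ℝ) + 5 / 2 ≤ 2 * m + 4 := by
      have : (0:ℝ) ≤ m := Nat.cast_nonneg m
      linarith
    linarith [h2r, hm2, hE1]
  have hfin : ((m : ℝ) + 5 / 2) + ((m : ℝ) * K + K + K) ≤ 3 / 2 * E := by
    linarith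
  refine hfin.trans ?_
  have hcast : (420 * (r : ℝ) * (s : ℝ)) ^ (((r : ℝ) * (s : ℝ)) / 2) = E := by
    rw [hE, hn]
    push_cast
    ring_nf
  rw [hcast]
  linarith
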